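/- arXiv:0801.0270 — 3 statements merged into one kernel-verified Lean document; each statement's English description precedes it below -/
import Mathlib

section
/- Let K(A,B) be the complete bipartite graph K(n,n) whose edges are colored with three colors (red, blue, green) so that every vertex has color degree 3. Let R be a red monochromatic connected component having the maximum number of vertices among all monochromatic components, with R1 = R ∩ A ≠ A and R2 = R ∩ B ≠ B, and set C = A − R1, D = B − R2 (so every edge between R1 and D and between R2 and C is blue or green). Suppose the vertex set of the induced complete bipartite graph K(C,D) cannot be partitioned into at most two vertex-disjoint monochromatic trees. Then every vertex of C ∪ D is incident with at least one red edge of K(C,D), and K(C,D) contains at least one blue edge and at least one green edge. -/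
/-!
Common definitions for edge-colored complete bipartite graphs.

The complete bipartite graph `K(A,B)` with partite sets `α` and `β` is modeled on the
vertex type `α ⊕ β`; an edge-coloring with color type `γ` is a function `c : α → β → γ`
(giving the color of the edge between `a : α` and `b : β`).
-/

/-- The spanning subgraph of the complete bipartite graph on parts `α`, `β` consisting of
the edges of color `k`, under the edge-coloring `c`. -/
def biColorGraph {α β γ : Type*} (c : α → β → γ) (k : γ) : SimpleGraph (α ⊕ β) where
  Adj x y := (∃ a b, x = Sum.inl a ∧ y = Sum.inr b ∧ c a b = k) ∨
             (∃ a b, x = Sum.inr b ∧ y = Sum.inl a ∧ c a b = k)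
  symm := by
    constructor
    rintro x y (⟨a, b, hx, hy, hc⟩ | ⟨a, b, hx, hy, hc⟩)
    · exact Or.inr ⟨a, b, hy, hx, hc⟩
    · exact Or.inl ⟨a, b, hy, hx, hc⟩
  loopless := by
    constructor
    rintro x (⟨a, b, hx, hy, _⟩ | ⟨a, b, hx, hy, _⟩) <;> subst hx <;> simp at hy

/-- `S` is the vertex set of a monochromatic tree: it induces a connected subgraph in some
color class.  (A single vertex also counts as a monochromatic tree.) -/
def IsMonoTreeSet {α β γ : Type*} (c : α → β → γ) (S : Set (α ⊕ β)) : Prop :=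
  ∃ k, ((biColorGraph c k).induce S).Connected

/-- `P` is a partition of the vertex set of the complete bipartite graph into
(nonempty, pairwise vertex-disjoint) vertex sets of monochromatic trees. -/
def IsMonoTreePartition {α β γ : Type*} (c : α → β → γ) (P : Finset (Set (α ⊕ β))) : Prop :=
  (∀ S ∈ P, IsMonoTreeSet c S) ∧ ∀ x : α ⊕ β, ∃! S, S ∈ P ∧ x ∈ S

/-- The vertex set can be partitioned into at most `m` vertex-disjoint monochromatic trees. -/
def HasMonoTreePartition {α β γ : Type*} (c : α → β → γ) (m : ℕ) : Prop :=
  ∃ P : Finset (Set (α ⊕ β)), IsMonoTreePartition c P ∧ P.card ≤ m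

/-- Every vertex has color degree 3, i.e. all three colors appear on its incident edges. -/
def ColorDegreeThree {α β : Type*} (c : α → β → Fin 3) : Prop :=
  (∀ (a : α) (k : Fin 3), ∃ b, c a b = k) ∧ ∀ (b : β) (k : Fin 3), ∃ a, c a b = k

/-! For 2-edge-colorings we use `Bool` as the color type: `true` = blue, `false` = green. -/

/-- The vertices of `α` all of whose incident edges are blue. -/
def XA {α β : Type*} (c : α → β → Bool) : Set α := {a | ∀ b, c a b = true}

/-- The vertices of `α` all of whose incident edges are green. -/
def YA {α β : Type*} (c : α → β → Bool) : Set α := {a | ∀ b, c a b = false}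

/-- The vertices of `β` all of whose incident edges are blue. -/
def XB {α β : Type*} (c : α → β → Bool) : Set β := {b | ∀ a, c a b = true}

/-- The vertices of `β` all of whose incident edges are green. -/
def YB {α β : Type*} (c : α → β → Bool) : Set β := {b | ∀ a, c a b = false}

/-- `S`-type graph: `X(G) ≠ ∅` and `Y(G) ≠ ∅`. -/
def IsSType {α β : Type*} (c : α → β → Bool) : Prop :=
  ((XA c).Nonempty ∨ (XB c).Nonempty) ∧ ((YA c).Nonempty ∨ (YB c).Nonempty)

/-- `M`-type graph: there are partitions `A = A1 ∪ A1ᶜ`, `B = B1 ∪ B1ᶜ` with all four parts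
nonempty such that `K(A1,B1)` and `K(A1ᶜ,B1ᶜ)` are blue and `K(A1,B1ᶜ)`, `K(A1ᶜ,B1)`
are green. -/
def IsMType {α β : Type*} (c : α → β → Bool) : Prop :=
  ∃ (A1 : Set α) (B1 : Set β),
    A1.Nonempty ∧ A1ᶜ.Nonempty ∧ B1.Nonempty ∧ B1ᶜ.Nonempty ∧
    (∀ a ∈ A1, ∀ b ∈ B1, c a b = true) ∧
    (∀ a ∈ A1ᶜ, ∀ b ∈ B1ᶜ, c a b = true) ∧
    (∀ a ∈ A1, ∀ b ∈ B1ᶜ, c a b = false) ∧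
    (∀ a ∈ A1ᶜ, ∀ b ∈ B1, c a b = false)

/-- For a subset `Bi ⊆ B`, the set `b(Bi) ⊆ A` of vertices sending blue edges to all of `Bi`
and green edges to all of `Biᶜ`.  (Thus `b(B̄i) = bsetA c Biᶜ`.) -/
def bsetA {α β : Type*} (c : α → β → Bool) (Bi : Set β) : Set α :=
  {a | (∀ b ∈ Bi, c a b = true) ∧ ∀ b ∈ Biᶜ, c a b = false}

/-- For a subset `Ai ⊆ A`, the set `b(Ai) ⊆ B` of vertices sending blue edges to all of `Ai`
and green edges to all of `Aiᶜ`. -/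
def bsetB {α β : Type*} (c : α → β → Bool) (Ai : Set α) : Set β :=
  {b | (∀ a ∈ Ai, c a b = true) ∧ ∀ a ∈ Aiᶜ, c a b = false}

/-- `S1*`-type graph with `X(G) ∪ Y(G) ⊆ A`: `|B| = 1`, `|A1| ≥ 2` and `|A3| ≥ 2`
(where `A1 = X(G)`, `A3 = Y(G)`). -/
def IsS1StarA {α β : Type*} [Fintype β] (c : α → β → Bool) : Prop :=
  Fintype.card β = 1 ∧ 2 ≤ (XA c).ncard ∧ 2 ≤ (YA c).ncard

/-- `S1'`-type graph with `X(G) ∪ Y(G) ⊆ A`: `|A1| ≥ 2`, `|A3| ≥ 2`, `|B| ≥ 2`, and for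
every partition `B = Bi ∪ B̄i` into nonempty parts, `b(Bi) ≠ ∅` and `b(B̄i) ≠ ∅`. -/
def IsS1PrimeA {α β : Type*} [Fintype β] (c : α → β → Bool) : Prop :=
  2 ≤ (XA c).ncard ∧ 2 ≤ (YA c).ncard ∧ 2 ≤ Fintype.card β ∧
  ∀ Bi : Set β, Bi.Nonempty → Biᶜ.Nonempty →
    (bsetA c Bi).Nonempty ∧ (bsetA c Biᶜ).Nonempty

/-- `S1*`-type graph with `X(G) ∪ Y(G) ⊆ B`. -/
def IsS1StarB {α β : Type*} [Fintype α] (c : α → β → Bool) : Prop :=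
  Fintype.card α = 1 ∧ 2 ≤ (XB c).ncard ∧ 2 ≤ (YB c).ncard

/-- `S1'`-type graph with `X(G) ∪ Y(G) ⊆ B`. -/
def IsS1PrimeB {α β : Type*} [Fintype α] (c : α → β → Bool) : Prop :=
  2 ≤ (XB c).ncard ∧ 2 ≤ (YB c).ncard ∧ 2 ≤ Fintype.card α ∧
  ∀ Ai : Set α, Ai.Nonempty → Aiᶜ.Nonempty →
    (bsetB c Ai).Nonempty ∧ (bsetB c Aiᶜ).Nonempty

/-- `S1`-type graph: `S1*`-type or `S1'`-type. -/
def IsS1 {α β : Type*} [Fintype α] [Fintype β] (c : α → β → Bool) : Prop :=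
  IsS1StarA c ∨ IsS1PrimeA c ∨ IsS1StarB c ∨ IsS1PrimeB c

/-- `S2`-type graph: an `S`-type graph that is not `S1`-type. -/
def IsS2 {α β : Type*} [Fintype α] [Fintype β] (c : α → β → Bool) : Prop :=
  IsSType c ∧ ¬ IsS1 c

section Aux

open SimpleGraph

private lemma biAdj {α β γ : Type*} {c : α → β → γ} {k : γ} {a : α} {b : β}
    (h : c a b = k) : (biColorGraph c k).Adj (Sum.inl a) (Sum.inr b) :=
  Or.inl ⟨a, b, rfl, rfl, h⟩

private lemma induce_adj {V : Type*} {G : SimpleGraph V} {S : Set V} {x y : V}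
    (hx : x ∈ S) (hy : y ∈ S) (h : G.Adj x y) :
    (G.induce S).Adj ⟨x, hx⟩ ⟨y, hy⟩ := by
  simpa using h

private lemma walk_lift {V : Type*} (G : SimpleGraph V) (S : Set V)
    (hcl : ∀ x ∈ S, ∀ y, G.Adj x y → y ∈ S) :
    ∀ {x y : V}, G.Walk x y → ∀ (hx : x ∈ S) (hy : y ∈ S),
      (G.induce S).Reachable ⟨x, hx⟩ ⟨y, hy⟩ := by
  intro x y w
  induction w with
  | nil =>
    intro hx hy
    exact Reachable.refl _
  | @cons u v w h p ih =>
    intro hx hy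
    have hv : v ∈ S := hcl _ hx _ h
    exact (induce_adj hx hv h).reachable.trans (ih hv hy)

private lemma connected_of_hub {V : Type*} (G : SimpleGraph V) (S : Set V)
    (hcl : ∀ x ∈ S, ∀ y, G.Adj x y → y ∈ S)
    (z : V) (hz : z ∈ S) (hreach : ∀ x ∈ S, G.Reachable x z) :
    (G.induce S).Connected := by
  rw [SimpleGraph.connected_iff]
  refine ⟨?_, ⟨⟨z, hz⟩⟩⟩
  rintro ⟨x, hx⟩ ⟨y, hy⟩
  obtain ⟨wx⟩ := hreach x hx
  obtain ⟨wy⟩ := hreach y hy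
  exact (walk_lift G S hcl wx hx hz).trans (walk_lift G S hcl wy hy hz).symm

/-- A complete monochromatic "cross" `inl '' P ∪ inr '' Q` is connected in color `k`. -/
private lemma cross_connected {α β : Type*} (c : α → β → Fin 3) (k : Fin 3)
    (P : Set α) (Q : Set β) (hP : P.Nonempty) (hQ : Q.Nonempty)
    (hall : ∀ a ∈ P, ∀ b ∈ Q, c a b = k) :
    ((biColorGraph c k).induce (Sum.inl '' P ∪ Sum.inr '' Q)).Connected := by
  obtain ⟨a0, ha0⟩ := hP
  obtain ⟨b0, hb0⟩ := hQ
  set S : Set (α ⊕ β) := Sum.inl '' P ∪ Sum.inr '' Q with hSdef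
  have hb0S : Sum.inr b0 ∈ S := Or.inr ⟨b0, hb0, rfl⟩
  have ha0S : Sum.inl a0 ∈ S := Or.inl ⟨a0, ha0, rfl⟩
  have key : ∀ x (hx : x ∈ S),
      ((biColorGraph c k).induce S).Reachable ⟨x, hx⟩ ⟨Sum.inr b0, hb0S⟩ := by
    rintro x hx
    rcases hx with ⟨a, ha, rfl⟩ | ⟨b, hb, rfl⟩
    · exact (induce_adj (show Sum.inl a ∈ S from Or.inl ⟨a, ha, rfl⟩) hb0S
        (biAdj (hall a ha b0 hb0))).reachable
    · have h1 := induce_adj (show Sum.inr b ∈ S from Or.inr ⟨b, hb, rfl⟩) ha0S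
        (biAdj (hall a0 ha0 b hb)).symm
      have h2 := induce_adj ha0S hb0S (biAdj (hall a0 ha0 b0 hb0))
      exact h1.reachable.trans h2.reachable
  rw [SimpleGraph.connected_iff]
  refine ⟨?_, ⟨⟨Sum.inr b0, hb0S⟩⟩⟩
  rintro ⟨x, hx⟩ ⟨y, hy⟩
  exact (key x hx).trans (key y hy).symm

private lemma two_tree_partition {α β : Type*} [Nonempty α] (c' : α → β → Fin 3) (g : Fin 3)
    (h0a : ∀ a, ∃ b, c' a b = 0) (h0b : ∀ b, ∃ a, c' a b = 0)
    (hcol : ∀ a b, c' a b = 0 ∨ c' a b = g) :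
    HasMonoTreePartition c' 2 := by
  classical
  by_cases hred : (∃ a0 : α, ∀ b, c' a0 b = 0) ∨ (∃ b0 : β, ∀ a, c' a b0 = 0)
  · -- one red spanning tree
    refine ⟨{Set.univ}, ⟨?_, ?_⟩, by simp⟩
    · intro S hS
      rw [Finset.mem_singleton] at hS
      subst hS
      refine ⟨0, ?_⟩
      set G := biColorGraph c' (0 : Fin 3) with hG
      obtain ⟨z, hz⟩ : ∃ z : α ⊕ β, ∀ x : α ⊕ β, G.Reachable x z := by
        rcases hred with ⟨a0, ha0⟩ | ⟨b0, hb0⟩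
        · refine ⟨Sum.inl a0, ?_⟩
          rintro (a | b)
          · obtain ⟨b, hb⟩ := h0a a
            exact (biAdj hb).reachable.trans (biAdj (ha0 b)).symm.reachable
          · exact (biAdj (ha0 b)).symm.reachable
        · refine ⟨Sum.inr b0, ?_⟩
          rintro (a | b)
          · exact (biAdj (hb0 a)).reachable
          · obtain ⟨a, ha⟩ := h0b b
            exact (biAdj ha).symm.reachable.trans (biAdj (hb0 a)).reachable
      exact connected_of_hub G Set.univ (fun _ _ y _ => Set.mem_univ y) z (Set.mem_univ z)
        (fun x _ => hz x)
    · intro x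
      refine ⟨Set.univ, ⟨Finset.mem_singleton_self _, Set.mem_univ x⟩, ?_⟩
      rintro S ⟨hS, -⟩
      rwa [Finset.mem_singleton] at hS
  · push_neg at hred
    obtain ⟨hga, hgb⟩ := hred
    have hga' : ∀ a : α, ∃ b, c' a b = g := by
      intro a
      obtain ⟨b, hb⟩ := hga a
      exact ⟨b, (hcol a b).resolve_left hb⟩
    have hgb' : ∀ b : β, ∃ a, c' a b = g := by
      intro b
      obtain ⟨a, ha⟩ := hgb b
      exact ⟨a, (hcol a b).resolve_left ha⟩
    set G := biColorGraph c' g with hG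
    obtain ⟨a₀⟩ := ‹Nonempty α›
    set S : Set (α ⊕ β) := {x | G.Reachable (Sum.inl a₀) x} with hSdef
    have hcl : ∀ x ∈ S, ∀ y, G.Adj x y → y ∈ S := fun x hx y h => hx.trans h.reachable
    by_cases hS : S = Set.univ
    · -- one green spanning tree
      refine ⟨{Set.univ}, ⟨?_, ?_⟩, by simp⟩
      · intro T hT
        rw [Finset.mem_singleton] at hT
        subst hT
        refine ⟨g, connected_of_hub G Set.univ (fun _ _ y _ => Set.mem_univ y)
          (Sum.inl a₀) (Set.mem_univ _) ?_⟩
        intro x _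
        have hx : x ∈ S := hS ▸ Set.mem_univ x
        exact hx.symm
      · intro x
        refine ⟨Set.univ, ⟨Finset.mem_singleton_self _, Set.mem_univ x⟩, ?_⟩
        rintro T ⟨hT, -⟩
        rwa [Finset.mem_singleton] at hT
    · -- two red cross trees
      set SA : Set α := {a | Sum.inl a ∈ S} with hSA
      set SB : Set β := {b | Sum.inr b ∈ S} with hSB
      have hSAne : SA.Nonempty := ⟨a₀, Reachable.refl _⟩
      have hSBne : SB.Nonempty := by
        obtain ⟨b, hb⟩ := hga' a₀
        exact ⟨b, (biAdj hb).reachable⟩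
      have hTne : ∃ x, x ∉ S := by
        by_contra h
        push_neg at h
        exact hS (Set.eq_univ_of_forall h)
      have hcompl : SAᶜ.Nonempty ∧ SBᶜ.Nonempty := by
        obtain ⟨x, hx⟩ := hTne
        rcases x with a | b
        · obtain ⟨b, hb⟩ := hga' a
          exact ⟨⟨a, hx⟩, ⟨b, fun hbS => hx (hcl _ hbS _ (biAdj hb).symm)⟩⟩
        · obtain ⟨a, ha⟩ := hgb' b
          exact ⟨⟨a, fun haS => hx (hcl _ haS _ (biAdj ha))⟩, ⟨b, hx⟩⟩
      have r1 : ∀ a ∈ SA, ∀ b ∈ SBᶜ, c' a b = 0 := by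
        intro a ha b hb
        rcases hcol a b with h | h
        · exact h
        · exact absurd (hcl _ ha _ (biAdj h)) hb
      have r2 : ∀ a ∈ SAᶜ, ∀ b ∈ SB, c' a b = 0 := by
        intro a ha b hb
        rcases hcol a b with h | h
        · exact h
        · exact absurd (hcl _ hb _ (biAdj h).symm) ha
      set T₁ : Set (α ⊕ β) := Sum.inl '' SA ∪ Sum.inr '' SBᶜ with hT₁
      set T₂ : Set (α ⊕ β) := Sum.inl '' SAᶜ ∪ Sum.inr '' SB with hT₂
      have hmemT₁ : ∀ x : α ⊕ β, x ∈ T₁ ↔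
          (∃ a, x = Sum.inl a ∧ a ∈ SA) ∨ (∃ b, x = Sum.inr b ∧ b ∈ SBᶜ) := by
        rintro (a | b) <;> simp [hT₁, eq_comm]
      have hmemT₂ : ∀ x : α ⊕ β, x ∈ T₂ ↔
          (∃ a, x = Sum.inl a ∧ a ∈ SAᶜ) ∨ (∃ b, x = Sum.inr b ∧ b ∈ SB) := by
        rintro (a | b) <;> simp [hT₂, eq_comm]
      refine ⟨{T₁, T₂}, ⟨?_, ?_⟩, Finset.card_le_two⟩
      · intro T hT
        rw [Finset.mem_insert, Finset.mem_singleton] at hT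
        rcases hT with rfl | rfl
        · exact ⟨0, cross_connected c' 0 SA SBᶜ hSAne hcompl.2 r1⟩
        · exact ⟨0, cross_connected c' 0 SAᶜ SB hcompl.1 hSBne r2⟩
      · rintro (a | b)
        · by_cases ha : a ∈ SA
          · refine ⟨T₁, ⟨by simp, Or.inl ⟨a, ha, rfl⟩⟩, ?_⟩
            rintro T ⟨hT, hxT⟩
            rw [Finset.mem_insert, Finset.mem_singleton] at hT
            rcases hT with rfl | rfl
            · rfl
            · rcases (hmemT₂ _).1 hxT with ⟨a', ha', ha''⟩ | ⟨b', hb', -⟩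
              · cases ha'; exact absurd ha ha''
              · exact absurd hb' (by simp)
          · refine ⟨T₂, ⟨by simp, Or.inl ⟨a, ha, rfl⟩⟩, ?_⟩
            rintro T ⟨hT, hxT⟩
            rw [Finset.mem_insert, Finset.mem_singleton] at hT
            rcases hT with rfl | rfl
            · rcases (hmemT₁ _).1 hxT with ⟨a', ha', ha''⟩ | ⟨b', hb', -⟩
              · cases ha'; exact absurd ha'' ha
              · exact absurd hb' (by simp)
            · rfl
        · by_cases hb : b ∈ SB
          · refine ⟨T₂, ⟨by simp, Or.inr ⟨b, hb, rfl⟩⟩, ?_⟩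
            rintro T ⟨hT, hxT⟩
            rw [Finset.mem_insert, Finset.mem_singleton] at hT
            rcases hT with rfl | rfl
            · rcases (hmemT₁ _).1 hxT with ⟨a', ha', -⟩ | ⟨b', hb', hb''⟩
              · exact absurd ha' (by simp)
              · cases hb'; exact absurd hb hb''
            · rfl
          · refine ⟨T₁, ⟨by simp, Or.inr ⟨b, hb, rfl⟩⟩, ?_⟩
            rintro T ⟨hT, hxT⟩
            rw [Finset.mem_insert, Finset.mem_singleton] at hT
            rcases hT with rfl | rfl
            · rfl
            · rcases (hmemT₂ _).1 hxT with ⟨a', ha', -⟩ | ⟨b', hb', hb''⟩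
              · exact absurd ha' (by simp)
              · cases hb'; exact absurd hb'' hb

end Aux

/-- **Claim 1.** Colors: `0` = red, `1` = blue, `2` = green.
Let `K(n,n)` be 3-edge-colored with every vertex of color degree 3, let `R` be a red
monochromatic component of maximum order among all monochromatic components, with
`R1 = R ∩ A ≠ A`, `R2 = R ∩ B ≠ B`, and let `C = A - R1`, `D = B - R2`.  If the vertex set
of `K(C,D)` cannot be partitioned into at most two vertex-disjoint monochromatic trees,
then every vertex of `C ∪ D` is incident with a red edge of `K(C,D)`, and `K(C,D)` has at
least one blue edge and at least one green edge. -/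
theorem claim_red_edges_and_both_colors {n : ℕ} (c : Fin n → Fin n → Fin 3)
    (hdeg : ColorDegreeThree c)
    (R : (biColorGraph c 0).ConnectedComponent)
    (hmax : ∀ (k : Fin 3) (Q : (biColorGraph c k).ConnectedComponent),
      Q.supp.ncard ≤ R.supp.ncard)
    (hR1 : {a : Fin n | Sum.inl a ∈ R.supp} ≠ Set.univ)
    (hR2 : {b : Fin n | Sum.inr b ∈ R.supp} ≠ Set.univ)
    (C D : Set (Fin n))
    (hC : C = {a : Fin n | Sum.inl a ∈ R.supp}ᶜ)
    (hD : D = {b : Fin n | Sum.inr b ∈ R.supp}ᶜ)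
    (hCD : ¬ HasMonoTreePartition (fun (a : C) (b : D) => c a.1 b.1) 2) :
    ((∀ a : C, ∃ b : D, c a.1 b.1 = 0) ∧ (∀ b : D, ∃ a : C, c a.1 b.1 = 0)) ∧
    (∃ (a : C) (b : D), c a.1 b.1 = 1) ∧ (∃ (a : C) (b : D), c a.1 b.1 = 2) := by
  classical
  have hCne : C.Nonempty := by
    rw [hC]
    rcases Set.nonempty_compl.2 hR1 with ⟨a, ha⟩
    exact ⟨a, ha⟩
  have hDne : D.Nonempty := by
    rw [hD]
    rcases Set.nonempty_compl.2 hR2 with ⟨b, hb⟩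
    exact ⟨b, hb⟩
  have hCa : ∀ a : Fin n, a ∈ C ↔ Sum.inl a ∉ R.supp := by
    intro a; rw [hC]; rfl
  have hDb : ∀ b : Fin n, b ∈ D ↔ Sum.inr b ∉ R.supp := by
    intro b; rw [hD]; rfl
  -- Part 1: red edges
  have part1a : ∀ a : C, ∃ b : D, c a.1 b.1 = 0 := by
    rintro ⟨a, ha⟩
    obtain ⟨b, hb⟩ := hdeg.1 a 0
    have hbD : b ∈ D := by
      rw [hDb]
      intro hbR
      apply (hCa a).1 ha
      rw [SimpleGraph.ConnectedComponent.mem_supp_iff] at hbR ⊢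
      rw [← hbR]
      exact SimpleGraph.ConnectedComponent.sound (biAdj hb).reachable
    exact ⟨⟨b, hbD⟩, hb⟩
  have part1b : ∀ b : D, ∃ a : C, c a.1 b.1 = 0 := by
    rintro ⟨b, hb⟩
    obtain ⟨a, ha⟩ := hdeg.2 b 0
    have haC : a ∈ C := by
      rw [hCa]
      intro haR
      apply (hDb b).1 hb
      rw [SimpleGraph.ConnectedComponent.mem_supp_iff] at haR ⊢
      rw [← haR]
      exact SimpleGraph.ConnectedComponent.sound (biAdj ha).reachable.symm
    exact ⟨⟨a, haC⟩, ha⟩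
  have : Nonempty C := ⟨⟨hCne.choose, hCne.choose_spec⟩⟩
  set c' : C → D → Fin 3 := fun a b => c a.1 b.1 with hc'
  have part1a' : ∀ a : C, ∃ b : D, c' a b = 0 := part1a
  have part1b' : ∀ b : D, ∃ a : C, c' a b = 0 := part1b
  refine ⟨⟨part1a, part1b⟩, ?_, ?_⟩
  · by_contra h
    push_neg at h
    apply hCD
    apply two_tree_partition c' 2 part1a' part1b'
    intro a b
    have h3 : ∀ x : Fin 3, x ≠ 1 → x = 0 ∨ x = 2 := by decide
    exact h3 _ (h a b)
  · by_contra h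
    push_neg at h
    apply hCD
    apply two_tree_partition c' 1 part1a' part1b'
    intro a b
    have h3 : ∀ x : Fin 3, x ≠ 2 → x = 0 ∨ x = 1 := by decide
    exact h3 _ (h a b)
end

section
/- Let K(A,B) be a complete bipartite graph whose edges are colored with two colors, blue and green, such that K(A,B) has a vertex x all of whose incident edges are blue and K(A,B) is not an S-type graph. Then K(A,B) has a blue spanning tree. -/
/-- If a 2-edge-colored complete bipartite graph has a vertex all of
whose incident edges are blue and is not an `S`-type graph, then it has a blue spanning
tree. -/
theorem blue_star_not_S_blue_spanning_tree {α β : Type*} [Fintype α] [Fintype β]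
    (c : α → β → Bool)
    (hx : (∃ a, ∀ b, c a b = true) ∨ (∃ b, ∀ a, c a b = true))
    (hS : ¬ IsSType c) :
    (biColorGraph c true).Connected := by
  rcases hx with ⟨a0, ha0⟩ | ⟨b0, hb0⟩
  · -- a0 sends blue to all of β
    have hX : (XA c).Nonempty := ⟨a0, ha0⟩
    have hYA : ∀ a, ∃ b, c a b = true := by
      intro a
      by_contra h
      push_neg at h
      exact hS ⟨Or.inl hX, Or.inl ⟨a, fun b => by simpa using h b⟩⟩
    have key : ∀ x, (biColorGraph c true).Reachable x (Sum.inl a0) := by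
      rintro (a | b)
      · obtain ⟨b, hb⟩ := hYA a
        exact (SimpleGraph.Adj.reachable (Or.inl ⟨a, b, rfl, rfl, hb⟩)).trans
          (SimpleGraph.Adj.reachable (Or.inr ⟨a0, b, rfl, rfl, ha0 b⟩))
      · exact SimpleGraph.Adj.reachable (Or.inr ⟨a0, b, rfl, rfl, ha0 b⟩)
    have : Nonempty (α ⊕ β) := ⟨Sum.inl a0⟩
    exact ⟨fun x y => (key x).trans (key y).symm⟩
  · -- b0 receives blue from all of α
    have hX : (XB c).Nonempty := ⟨b0, hb0⟩
    have hYB : ∀ b, ∃ a, c a b = true := by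
      intro b
      by_contra h
      push_neg at h
      exact hS ⟨Or.inr hX, Or.inr ⟨b, fun a => by simpa using h a⟩⟩
    have key : ∀ x, (biColorGraph c true).Reachable x (Sum.inr b0) := by
      rintro (a | b)
      · exact SimpleGraph.Adj.reachable (Or.inl ⟨a, b0, rfl, rfl, hb0 a⟩)
      · obtain ⟨a, ha⟩ := hYB b
        exact (SimpleGraph.Adj.reachable (Or.inr ⟨a, b, rfl, rfl, ha⟩)).trans
          (SimpleGraph.Adj.reachable (Or.inl ⟨a, b0, rfl, rfl, hb0 a⟩))
    have : Nonempty (α ⊕ β) := ⟨Sum.inr b0⟩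
    exact ⟨fun x y => (key x).trans (key y).symm⟩
end

section
/- Let K(A,B) be a complete bipartite graph whose edges are colored with two colors, blue and green, such that every vertex is incident with at least one blue edge and at least one green edge, the spanning subgraph formed by the green edges is disconnected, and K(A,B) is not an M-type graph. Then K(A,B) has a blue spanning tree. -/
/-- If in a 2-edge-colored complete bipartite graph every vertex is
incident with at least one blue and at least one green edge, the spanning subgraph of
green edges is disconnected, and the graph is not an `M`-type graph, then it has a blue
spanning tree. -/
theorem green_disconnected_not_M_blue_spanning_tree {α β : Type*} [Fintype α] [Fintype β]
    [Nonempty α] [Nonempty β] (c : α → β → Bool)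
    (hblue : (∀ a, ∃ b, c a b = true) ∧ ∀ b, ∃ a, c a b = true)
    (hgreen : (∀ a, ∃ b, c a b = false) ∧ ∀ b, ∃ a, c a b = false)
    (hdis : ¬ (biColorGraph c false).Connected)
    (hM : ¬ IsMType c) :
    (biColorGraph c true).Connected := by
  classical
  set G := biColorGraph c false with hGdef
  set H := biColorGraph c true with hHdef
  -- adjacency helpers
  have gadj : ∀ {a : α} {b : β}, c a b = false → G.Adj (Sum.inl a) (Sum.inr b) :=
    fun h => Or.inl ⟨_, _, rfl, rfl, h⟩
  have badj : ∀ {a : α} {b : β}, c a b = true → H.Adj (Sum.inl a) (Sum.inr b) :=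
    fun h => Or.inl ⟨_, _, rfl, rfl, h⟩
  -- green disconnected: get u, v not reachable in G
  have hnp : ¬ G.Preconnected := fun h => hdis ⟨h⟩
  unfold SimpleGraph.Preconnected at hnp
  push_neg at hnp
  obtain ⟨u, v, huv⟩ := hnp
  set A1 : Set α := {a | G.Reachable u (Sum.inl a)} with hA1
  set B1 : Set β := {b | G.Reachable u (Sum.inr b)} with hB1
  have blue1 : ∀ a ∈ A1, ∀ b ∉ B1, c a b = true := by
    intro a ha b hb
    by_contra h
    exact hb (ha.trans (gadj (Bool.not_eq_true _ ▸ h)).reachable)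
  have blue2 : ∀ a ∉ A1, ∀ b ∈ B1, c a b = true := by
    intro a ha b hb
    by_contra h
    exact ha (hb.trans (gadj (Bool.not_eq_true _ ▸ h)).symm.reachable)
  -- nonemptiness of the four parts
  obtain ⟨a1, ha1, b1, hb1, -⟩ : ∃ a ∈ A1, ∃ b ∈ B1, True := by
    rcases u with a0 | b0
    · obtain ⟨b0, hb0⟩ := hgreen.1 a0
      exact ⟨a0, SimpleGraph.Reachable.refl _, b0, (gadj hb0).reachable, trivial⟩
    · obtain ⟨a0, ha0⟩ := hgreen.2 b0
      exact ⟨a0, (gadj ha0).symm.reachable, b0, SimpleGraph.Reachable.refl _, trivial⟩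
  obtain ⟨a2, ha2, b2, hb2, -⟩ : ∃ a, a ∉ A1 ∧ ∃ b, b ∉ B1 ∧ True := by
    rcases v with a0 | b0
    · obtain ⟨b0, hb0⟩ := hgreen.1 a0
      refine ⟨a0, huv, b0, fun hb => ?_, trivial⟩
      exact huv (hb.trans (gadj hb0).symm.reachable)
    · obtain ⟨a0, ha0⟩ := hgreen.2 b0
      refine ⟨a0, fun ha => huv (ha.trans (gadj ha0).reachable), b0, huv, trivial⟩
  -- not M-type gives a blue cross edge
  have hcross : (∃ a ∈ A1, ∃ b ∈ B1, c a b = true) ∨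
      (∃ a, a ∉ A1 ∧ ∃ b, b ∉ B1 ∧ c a b = true) := by
    by_contra h
    push_neg at h
    obtain ⟨h1, h2⟩ := h
    apply hM
    refine ⟨A1, B1ᶜ, ⟨a1, ha1⟩, ⟨a2, ha2⟩, ⟨b2, hb2⟩, ⟨b1, by simpa using hb1⟩,
      ?_, ?_, ?_, ?_⟩
    · intro a ha b hb; exact blue1 a ha b hb
    · intro a ha b hb
      exact blue2 a ha b (by simpa using hb)
    · intro a ha b hb
      have := h1 a ha b (by simpa using hb)
      simpa using this
    · intro a ha b hb
      have := h2 a ha b hb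
      simpa using this
  -- key reachability in blue graph
  have key : ∀ b ∈ B1, H.Reachable (Sum.inr b) (Sum.inr b2) := by
    rcases hcross with ⟨a0, ha0, b0, hb0, hc0⟩ | ⟨a0, ha0, b0, hb0, hc0⟩
    · intro b hb
      have r1 : H.Reachable (Sum.inr b) (Sum.inl a2) := (badj (blue2 a2 ha2 b hb)).symm.reachable
      have r2 : H.Reachable (Sum.inl a2) (Sum.inr b0) := (badj (blue2 a2 ha2 b0 hb0)).reachable
      have r3 : H.Reachable (Sum.inr b0) (Sum.inl a0) := (badj hc0).symm.reachable
      have r4 : H.Reachable (Sum.inl a0) (Sum.inr b2) := (badj (blue1 a0 ha0 b2 hb2)).reachable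
      exact ((r1.trans r2).trans r3).trans r4
    · intro b hb
      have r1 : H.Reachable (Sum.inr b) (Sum.inl a0) := (badj (blue2 a0 ha0 b hb)).symm.reachable
      have r2 : H.Reachable (Sum.inl a0) (Sum.inr b0) := (badj hc0).reachable
      have r3 : H.Reachable (Sum.inr b0) (Sum.inl a1) := (badj (blue1 a1 ha1 b0 hb0)).symm.reachable
      have r4 : H.Reachable (Sum.inl a1) (Sum.inr b2) := (badj (blue1 a1 ha1 b2 hb2)).reachable
      exact ((r1.trans r2).trans r3).trans r4
  have all : ∀ x : α ⊕ β, H.Reachable x (Sum.inr b2) := by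
    rintro (a | b)
    · by_cases ha : a ∈ A1
      · exact (badj (blue1 a ha b2 hb2)).reachable
      · exact ((badj (blue2 a ha b1 hb1)).reachable).trans (key b1 hb1)
    · by_cases hb : b ∈ B1
      · exact key b hb
      · exact ((badj (blue1 a1 ha1 b hb)).symm.reachable).trans
          ((badj (blue1 a1 ha1 b2 hb2)).reachable)
  exact ⟨fun x y => (all x).trans (all y).symm⟩
end
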